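/- Let n ≥ 3, view S_n as the group of permutations of ℤ/nℤ, and let τ ∈ N_{S_n}(C) be given by τ(x) = dx + r, with cycle type (m^k, 1, 1) for some integers m ≥ 2 and k. Then: n is even; gcd(n, d−1) = 2 and 2 divides r, so τ is conjugate to τ̃ : x ↦ dx, whose two fixed points are 0 and n/2; and if 4 divides n, then m = 2. -/

import Mathlib

open Finset

/-- The number of solutions of `a * x = 0` in `ZMod n` is `gcd n a.val`. -/
lemma card_ker_mulLeft (n : ℕ) [NeZero n] (a : ZMod n) :
    (Finset.univ.filter (fun x : ZMod n => a * x = 0)).card = Nat.gcd n a.val := by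
  classical
  set f : ZMod n →+ ZMod n := AddMonoidHom.mulLeft a with hf
  have hker : Nat.card f.ker =
      (Finset.univ.filter (fun x : ZMod n => a * x = 0)).card := by
    have e : f.ker ≃ {x : ZMod n // a * x = 0} :=
      Equiv.subtypeEquivRight (fun x => by simp [f, AddMonoidHom.mem_ker])
    rw [Nat.card_congr e, Nat.card_eq_fintype_card, Fintype.card_subtype]
  have hrange : f.range = AddSubgroup.zmultiples a := by
    ext y
    constructor
    · rintro ⟨x, rfl⟩
      exact ⟨(x.val : ℤ), by push_cast [ZMod.natCast_zmod_val]; simp [f, mul_comm]⟩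
    · rintro ⟨t, rfl⟩
      exact ⟨(t : ZMod n), by simp [f, mul_comm]⟩
  have hcardrange : Nat.card f.range = n / Nat.gcd n a.val := by
    rw [hrange, Nat.card_zmultiples]
    conv_lhs => rw [← ZMod.natCast_zmod_val a]
    rw [ZMod.addOrderOf_coe _ (NeZero.ne n)]
  have hsplit : Nat.card (ZMod n) =
      Nat.card (ZMod n ⧸ f.ker) * Nat.card f.ker :=
    AddSubgroup.card_eq_card_quotient_mul_card_addSubgroup f.ker
  rw [Nat.card_zmod, Nat.card_congr (QuotientAddGroup.quotientKerEquivRange f).toEquiv,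
    hcardrange, hker] at hsplit
  have hg : Nat.gcd n a.val ∣ n := Nat.gcd_dvd_left _ _
  have hgpos : 0 < Nat.gcd n a.val :=
    Nat.gcd_pos_of_pos_left _ (Nat.pos_of_ne_zero (NeZero.ne n))
  have hq : 0 < n / Nat.gcd n a.val :=
    Nat.div_pos (Nat.le_of_dvd (Nat.pos_of_ne_zero (NeZero.ne n)) hg) hgpos
  have := Nat.div_mul_cancel hg
  exact Nat.eq_of_mul_eq_mul_left hq (by omega)

/-- The `n`-cycle `x ↦ x + 1` on `ℤ/nℤ`, as a permutation. -/
def cyc (n : ℕ) : Equiv.Perm (ZMod n) := Equiv.addLeft (1 : ZMod n)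

/-- Let `τ ∈ N_{S_n}(C)` be given by `τ(x) = d·x + r`, with cycle type `(m^k, 1, 1)`
(i.e. `k` cycles of length `m ≥ 2` and two fixed points, so `m·k = n − 2`). Then `n` is
even; `gcd(n, d−1) = 2` and `2 ∣ r`, so `τ` is conjugate to `τ̃ : x ↦ d·x`, whose two fixed
points are `0` and `n/2`; and if `4 ∣ n` then `m = 2`. -/
theorem normalizer_two_fixed_points
    (n : ℕ) (hn : 3 ≤ n) [NeZero n] (τ : Equiv.Perm (ZMod n))
    (hτ : τ ∈ Subgroup.normalizer ((Subgroup.zpowers (cyc n) : Subgroup (Equiv.Perm (ZMod n))) : Set (Equiv.Perm (ZMod n))))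
    (d : (ZMod n)ˣ) (r : ZMod n) (hform : ∀ x : ZMod n, τ x = (d : ZMod n) * x + r)
    (m k : ℕ) (hm : 2 ≤ m)
    (hcyc : τ.cycleType = Multiset.replicate k m) (hmk : m * k = n - 2) :
    Even n ∧
    Nat.gcd n ((d : ZMod n) - 1).val = 2 ∧
    2 ∣ r.val ∧
    (∃ τ' : Equiv.Perm (ZMod n),
      (∀ x : ZMod n, τ' x = (d : ZMod n) * x) ∧
      IsConj τ τ' ∧
      {x : ZMod n | τ' x = x} = {0, ((n / 2 : ℕ) : ZMod n)}) ∧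
    (4 ∣ n → m = 2) := by
  classical
  have hnpos : 0 < n := by omega
  set a : ZMod n := (d : ZMod n) - 1 with ha
  clear_value a
  -- fixed point characterization
  have hfix : ∀ x : ZMod n, τ x = x ↔ a * x = -r := by
    intro x
    rw [hform x, ha]
    constructor <;> intro h <;> linear_combination h
  -- support card
  have hsupp : τ.support.card = n - 2 := by
    rw [← Equiv.Perm.sum_cycleType, hcyc, Multiset.sum_replicate, smul_eq_mul,
      Nat.mul_comm]
    exact hmk
  have hFcard : (Finset.univ.filter (fun x : ZMod n => τ x = x)).card = 2 := by
    have hc : Finset.univ.filter (fun x : ZMod n => τ x = x) = τ.supportᶜ := by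
      ext x; simp [Equiv.Perm.mem_support]
    have hle : τ.support.card ≤ Fintype.card (ZMod n) := Finset.card_le_univ _
    rw [hc, Finset.card_compl, ZMod.card, hsupp]
    rw [ZMod.card] at hle
    omega
  -- a fixed point exists
  obtain ⟨x0, hx0⟩ : ∃ x0 : ZMod n, τ x0 = x0 := by
    have hne : (Finset.univ.filter (fun x : ZMod n => τ x = x)).Nonempty :=
      Finset.card_pos.mp (by rw [hFcard]; norm_num)
    obtain ⟨x0, hx0⟩ := hne
    exact ⟨x0, (Finset.mem_filter.mp hx0).2⟩
  have hx0' : a * x0 = -r := (hfix x0).mp hx0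
  set K : Finset (ZMod n) := Finset.univ.filter (fun x : ZMod n => a * x = 0) with hKdef
  clear_value K
  have hKF : Finset.univ.filter (fun x : ZMod n => τ x = x) = K.image (· + x0) := by
    ext x
    simp only [hKdef, Finset.mem_image, Finset.mem_filter, Finset.mem_univ, true_and, hfix]
    constructor
    · intro h
      exact ⟨x - x0, by linear_combination h - hx0', by ring⟩
    · rintro ⟨y, hy, rfl⟩
      linear_combination hy + hx0'
  have hKcard : K.card = 2 := by
    rw [hKF, Finset.card_image_of_injective _ (add_left_injective x0)] at hFcard
    exact hFcard
  have hgcd : Nat.gcd n a.val = 2 := by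
    rw [← card_ker_mulLeft n a, ← hKdef]
    exact hKcard
  have h2n : 2 ∣ n := hgcd ▸ Nat.gcd_dvd_left n a.val
  have h2a : 2 ∣ a.val := hgcd ▸ Nat.gcd_dvd_right n a.val
  have heven : Even n := Nat.even_iff.mpr (by omega)
  -- 2 ∣ r.val
  have hr2 : 2 ∣ r.val := by
    have h1 : r = a * (-x0) := by linear_combination hx0'
    have h2 : r.val = (a.val * (-x0).val) % n := by rw [h1, ZMod.val_mul]
    rw [h2]
    exact (Nat.dvd_mod_iff h2n).mpr (Dvd.dvd.mul_right h2a _)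
  -- the conjugate
  set t : Equiv.Perm (ZMod n) := Equiv.addLeft (-x0) with htdef
  clear_value t
  set τ' : Equiv.Perm (ZMod n) := t * τ * t⁻¹ with hτ'def
  clear_value τ'
  have hform' : ∀ x : ZMod n, τ' x = (d : ZMod n) * x := by
    intro x
    have h1 : τ' x = τ (x + x0) + -x0 := by
      simp [hτ'def, htdef, Equiv.Perm.mul_apply, add_comm]
    rw [h1, hform]
    linear_combination hx0' - x0 * ha
  have hconj : IsConj τ τ' := by
    rw [isConj_iff]
    exact ⟨t, hτ'def.symm⟩
  -- the kernel is {0, n/2}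
  set c : ZMod n := ((n / 2 : ℕ) : ZMod n) with hcdef
  clear_value c
  have hc0 : c ≠ 0 := by
    intro h
    rw [hcdef, ZMod.natCast_eq_zero_iff] at h
    have := Nat.le_of_dvd (by omega) h
    omega
  have hcK : c ∈ K := by
    rw [hKdef, Finset.mem_filter]
    refine ⟨Finset.mem_univ _, ?_⟩
    rw [hcdef, ← ZMod.natCast_zmod_val a, ← Nat.cast_mul, ZMod.natCast_eq_zero_iff]
    obtain ⟨u, hu⟩ := h2a
    refine ⟨u, ?_⟩
    have h22 : 2 * (n / 2) = n := by omega
    calc a.val * (n / 2) = u * (2 * (n / 2)) := by rw [hu]; ring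
      _ = n * u := by rw [h22]; ring
  have h0K : (0 : ZMod n) ∈ K := by
    rw [hKdef, Finset.mem_filter]
    exact ⟨Finset.mem_univ _, by ring⟩
  have hKeq : K = {0, c} := by
    symm
    apply Finset.eq_of_subset_of_card_le
    · intro x hx
      rcases Finset.mem_insert.mp hx with h | h
      · rwa [h]
      · rw [Finset.mem_singleton.mp h]; exact hcK
    · rw [hKcard, Finset.card_insert_of_notMem (by simpa using hc0.symm),
        Finset.card_singleton]
  have hKset : {x : ZMod n | τ' x = x} = {0, c} := by
    ext x
    have hx : τ' x = x ↔ a * x = 0 := by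
      rw [hform' x]
      constructor <;> intro h <;>
        first
        | linear_combination h + x * ha
        | linear_combination h - x * ha
    have hxK : a * x = 0 ↔ x ∈ K := by
      rw [hKdef, Finset.mem_filter]
      simp
    simp only [Set.mem_setOf_eq, Set.mem_insert_iff, Set.mem_singleton_iff, hx, hxK, hKeq]
    simp
  refine ⟨heven, hgcd, hr2, ⟨τ', hform', hconj, hKset⟩, ?_⟩
  -- 4 ∣ n → m = 2
  intro h4
  set x1 : ZMod n := ((n / 4 : ℕ) : ZMod n) with hx1def
  clear_value x1
  have hq4 : 4 * (n / 4) = n := Nat.mul_div_cancel' h4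
  have hqpos : 0 < n / 4 := by omega
  -- a.val % 4 = 2
  have hna4 : ¬ (4 ∣ a.val) := by
    intro h
    have := Nat.dvd_gcd h4 h
    rw [hgcd] at this
    omega
  have ha4 : a.val % 4 = 2 := by omega
  -- d^2 - 1 is divisible by 4
  have hd4 : (4:ℕ) ∣ ((d : ZMod n) * (d : ZMod n) - 1).val := by
    have hdd : (d : ZMod n) * (d : ZMod n) - 1 = a * a + 2 * a := by
      rw [ha]; ring
    rw [hdd, ← ZMod.natCast_zmod_val a]
    have : ((a.val : ZMod n) * (a.val : ZMod n) + 2 * (a.val : ZMod n))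
        = ((a.val * a.val + 2 * a.val : ℕ) : ZMod n) := by push_cast; ring
    rw [this, ZMod.val_natCast]
    have hdvd : (4:ℕ) ∣ a.val * a.val + 2 * a.val := by
      obtain ⟨u, hu⟩ : ∃ u, a.val = 4 * u + 2 := ⟨a.val / 4, by omega⟩
      exact ⟨4*u*u + 6*u + 2, by rw [hu]; ring⟩
    exact (Nat.dvd_mod_iff h4).mpr hdvd
  -- τ'^2 fixes x1
  have hper : τ' (τ' x1) = x1 := by
    rw [hform', hform']
    have : (d : ZMod n) * ((d : ZMod n) * x1) - x1
        = ((d : ZMod n) * (d : ZMod n) - 1) * x1 := by ring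
    have hz : ((d : ZMod n) * (d : ZMod n) - 1) * x1 = 0 := by
      rw [← ZMod.natCast_zmod_val ((d : ZMod n) * (d : ZMod n) - 1), hx1def,
        ← Nat.cast_mul, ZMod.natCast_eq_zero_iff]
      obtain ⟨w, hw⟩ := hd4
      refine ⟨w, ?_⟩
      calc ((d : ZMod n) * (d : ZMod n) - 1).val * (n / 4)
          = w * (4 * (n / 4)) := by rw [hw]; ring
        _ = n * w := by rw [hq4]; ring
    linear_combination hz
  -- x1 is not fixed
  have hne : τ' x1 ≠ x1 := by
    rw [hform']
    intro h
    have hz : a * x1 = 0 := by linear_combination h + x1 * ha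
    rw [← ZMod.natCast_zmod_val a, hx1def, ← Nat.cast_mul,
      ZMod.natCast_eq_zero_iff] at hz
    obtain ⟨w, hw⟩ := hz
    have hcalc : a.val * (n / 4) = 4 * w * (n / 4) := by
      calc a.val * (n / 4) = n * w := hw
        _ = 4 * (n / 4) * w := by rw [hq4]
        _ = 4 * w * (n / 4) := by ring
    exact hna4 ⟨w, Nat.eq_of_mul_eq_mul_right hqpos hcalc⟩
  -- the orbit of x1 has exactly two elements
  have hkey : (τ' ^ (2:ℤ)) x1 = x1 := by
    rw [show ((2:ℤ)) = ((2:ℕ):ℤ) by norm_num, zpow_natCast, pow_two,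
      Equiv.Perm.mul_apply]
    exact hper
  have horb : ∀ i : ℤ, (τ' ^ i) x1 = x1 ∨ (τ' ^ i) x1 = τ' x1 := by
    intro i
    have h2q : ∀ j : ℤ, (τ' ^ (2 * j)) x1 = x1 := by
      intro j
      rw [zpow_mul]
      exact Equiv.Perm.zpow_apply_eq_self_of_apply_eq_self hkey j
    rcases Int.even_or_odd i with ⟨j, hj⟩ | ⟨j, hj⟩
    · left
      have := h2q j
      rwa [two_mul, ← hj] at this
    · right
      rw [hj, add_comm, zpow_add, zpow_one, Equiv.Perm.mul_apply, h2q j]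
  have hx1supp : x1 ∈ τ'.support := Equiv.Perm.mem_support.mpr hne
  have hsuppc : (τ'.cycleOf x1).support = {x1, τ' x1} := by
    ext y
    rw [Equiv.Perm.mem_support_cycleOf_iff]
    constructor
    · rintro ⟨⟨i, hi⟩, -⟩
      rcases horb i with h | h
      · rw [h] at hi
        simp [← hi]
      · rw [h] at hi
        simp [← hi]
    · intro hy
      refine ⟨?_, hx1supp⟩
      rcases Finset.mem_insert.mp hy with h | h
      · rw [h]
      · rw [Finset.mem_singleton.mp h]
        exact ⟨1, by simp⟩
  have hcard2 : (τ'.cycleOf x1).support.card = 2 := by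
    rw [hsuppc, Finset.card_insert_of_notMem (by simpa using (Ne.symm hne)),
      Finset.card_singleton]
  have hmemct : (τ'.cycleOf x1).support.card ∈ τ'.cycleType := by
    rw [Equiv.Perm.cycleType_def]
    exact Multiset.mem_map_of_mem _
      (Finset.mem_val.mpr (Equiv.Perm.cycleOf_mem_cycleFactorsFinset_iff.mpr hx1supp))
  have hct' : τ'.cycleType = Multiset.replicate k m := by
    rw [hτ'def, Equiv.Perm.cycleType_conj, hcyc]
  rw [hct', hcard2] at hmemct
  exact (Multiset.eq_of_mem_replicate hmemct).symm
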